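/- Let p, q, r, s be integers greater than 1 with ps − qr = 1; set N = pqrs, α = qr − 1, β = ps − 1. Define M : ℤ × ℤ → ℤ/Nℤ to be 4-periodic in both indices with fundamental 4×4 block (rows listed top to bottom, entries taken mod N): (p, q, −p, −q), (r, s, −r, −s), (αp, βq, p, q), (βr, αs, r, s). Then every entry of M is wild: for all i, j ∈ ℤ, the determinant of the 3×3 matrix (M(i+u, j+v))_{u,v ∈ {−1,0,1}} is nonzero in ℤ/Nℤ. -/

import Mathlib

/-- The determinant of the 3×3 block of `m` centred at `(i, j)`. -/
def nbhdDet {R : Type*} [CommRing R] (m : ℤ × ℤ → R) (i j : ℤ) : R :=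
  (Matrix.of fun u v : Fin 3 => m (i + ((u : ℕ) : ℤ) - 1, j + ((v : ℕ) : ℤ) - 1)).det

/-- The entry `m (i, j)` is wild if the surrounding 3×3 determinant is nonzero. -/
def IsWild {R : Type*} [CommRing R] (m : ℤ × ℤ → R) (i j : ℤ) : Prop :=
  nbhdDet m i j ≠ 0

/-- The fundamental 4×4 block with rows
`(p, q, -p, -q)`, `(r, s, -r, -s)`, `(αp, βq, p, q)`, `(βr, αs, r, s)`,
where `α = qr - 1` and `β = ps - 1`. -/
def blockM (p q r s : ℤ) : Fin 4 → Fin 4 → ℤ :=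
  ![![p, q, -p, -q],
    ![r, s, -r, -s],
    ![(q * r - 1) * p, (p * s - 1) * q, p, q],
    ![(p * s - 1) * r, (q * r - 1) * s, r, s]]

open Fin.NatCast in
/-- The doubly 4-periodic tiling over `ZMod N` with fundamental block `blockM p q r s`. -/
def Mpqrs (p q r s : ℤ) (N : ℕ) : ℤ × ℤ → ZMod N := fun ij =>
  ((blockM p q r s ((ij.1 % 4).toNat : Fin 4) ((ij.2 % 4).toNat : Fin 4) : ℤ) : ZMod N)

open Fin.NatCast in
/-- The integer-valued version of the tiling. -/
def intM (p q r s : ℤ) : ℤ × ℤ → ℤ := fun ij =>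
  blockM p q r s ((ij.1 % 4).toNat : Fin 4) ((ij.2 % 4).toNat : Fin 4)

lemma cast_nbhd (p q r s : ℤ) (N : ℕ) (i j : ℤ) :
    nbhdDet (Mpqrs p q r s N) i j = ((nbhdDet (intM p q r s) i j : ℤ) : ZMod N) := by
  simp only [nbhdDet, Matrix.det_fin_three, Matrix.of_apply, Mpqrs, intM]
  push_cast
  ring

lemma nbhd_period (p q r s : ℤ) (i j : ℤ) :
    nbhdDet (intM p q r s) i j = nbhdDet (intM p q r s) (i % 4) (j % 4) := by
  unfold nbhdDet
  congr 1
  ext u v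
  simp only [Matrix.of_apply, intM]
  have h1 : (i + ((u : ℕ) : ℤ) - 1) % 4 = (i % 4 + ((u : ℕ) : ℤ) - 1) % 4 := by omega
  have h2 : (j + ((v : ℕ) : ℤ) - 1) % 4 = (j % 4 + ((v : ℕ) : ℤ) - 1) % 4 := by omega
  rw [h1, h2]

lemma notA (p q r s : ℤ) (hp : 1 < p) (hq : 1 < q) (hr : 1 < r) (hs : 1 < s)
    (hdet : p * s - q * r = 1) : ¬ p * q * r * s ∣ q * r * s := by
  intro h
  have hpos : (0 : ℤ) < q * r * s := by positivity
  have := Int.le_of_dvd hpos h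
  nlinarith

lemma notB (p q r s : ℤ) (hp : 1 < p) (hq : 1 < q) (hr : 1 < r) (hs : 1 < s)
    (hdet : p * s - q * r = 1) : ¬ p * q * r * s ∣ p * r * s := by
  intro h
  have hpos : (0 : ℤ) < p * r * s := by positivity
  have := Int.le_of_dvd hpos h
  nlinarith

lemma notC (p q r s : ℤ) (hp : 1 < p) (hq : 1 < q) (hr : 1 < r) (hs : 1 < s)
    (hdet : p * s - q * r = 1) : ¬ p * q * r * s ∣ p * q * s := by
  intro h
  have hpos : (0 : ℤ) < p * q * s := by positivity
  have := Int.le_of_dvd hpos h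
  nlinarith

lemma notD (p q r s : ℤ) (hp : 1 < p) (hq : 1 < q) (hr : 1 < r) (hs : 1 < s)
    (hdet : p * s - q * r = 1) : ¬ p * q * r * s ∣ p * q * r := by
  intro h
  have hpos : (0 : ℤ) < p * q * r := by positivity
  have := Int.le_of_dvd hpos h
  nlinarith

lemma notE (p q r s : ℤ) (hp : 1 < p) (hq : 1 < q) (hr : 1 < r) (hs : 1 < s)
    (hdet : p * s - q * r = 1) : ¬ p * q * r * s ∣ q * r * s + p * q * r * s * s := by
  intro h
  have h1 : q * r * s + p * q * r * s * s = (q * r * s) * (1 + p * s) := by ring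
  have h2 : p * q * r * s = (q * r * s) * p := by ring
  rw [h1, h2] at h
  have hne : (q * r * s : ℤ) ≠ 0 := by positivity
  have h3 : p ∣ 1 + p * s := (mul_dvd_mul_iff_left hne).mp h
  rw [add_comm] at h3
  have h5 : p ∣ 1 := (dvd_add_right (dvd_mul_right p s)).mp h3
  have := Int.le_of_dvd one_pos h5
  omega

lemma notF (p q r s : ℤ) (hp : 1 < p) (hq : 1 < q) (hr : 1 < r) (hs : 1 < s)
    (hdet : p * s - q * r = 1) : ¬ p * q * r * s ∣ p * p * r * s * s := by
  intro h
  have h1 : p * p * r * s * s = (p * r * s) * (p * s) := by ring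
  have h2 : p * q * r * s = (p * r * s) * q := by ring
  rw [h1, h2] at h
  have hne : (p * r * s : ℤ) ≠ 0 := by positivity
  have h3 : q ∣ p * s := (mul_dvd_mul_iff_left hne).mp h
  have h4 : p * s = q * r + 1 := by linarith
  rw [h4] at h3
  have h5 : q ∣ 1 := (dvd_add_right (dvd_mul_right q r)).mp h3
  have := Int.le_of_dvd one_pos h5
  omega

lemma notG (p q r s : ℤ) (hp : 1 < p) (hq : 1 < q) (hr : 1 < r) (hs : 1 < s)
    (hdet : p * s - q * r = 1) : ¬ p * q * r * s ∣ p * p * q * s * s := by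
  intro h
  have h1 : p * p * q * s * s = (p * q * s) * (p * s) := by ring
  have h2 : p * q * r * s = (p * q * s) * r := by ring
  rw [h1, h2] at h
  have hne : (p * q * s : ℤ) ≠ 0 := by positivity
  have h3 : r ∣ p * s := (mul_dvd_mul_iff_left hne).mp h
  have h4 : p * s = r * q + 1 := by linarith
  rw [h4] at h3
  have h5 : r ∣ 1 := (dvd_add_right (dvd_mul_right r q)).mp h3
  have := Int.le_of_dvd one_pos h5
  omega

lemma notH (p q r s : ℤ) (hp : 1 < p) (hq : 1 < q) (hr : 1 < r) (hs : 1 < s)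
    (hdet : p * s - q * r = 1) : ¬ p * q * r * s ∣ p * q * r + p * p * q * r * s := by
  intro h
  have h1 : p * q * r + p * p * q * r * s = (p * q * r) * (1 + p * s) := by ring
  have h2 : p * q * r * s = (p * q * r) * s := by ring
  rw [h1, h2] at h
  have hne : (p * q * r : ℤ) ≠ 0 := by positivity
  have h3 : s ∣ 1 + p * s := (mul_dvd_mul_iff_left hne).mp h
  have h3' : s ∣ 1 + s * p := by rwa [mul_comm p s] at h3
  rw [add_comm] at h3'
  have h5 : s ∣ 1 := (dvd_add_right (dvd_mul_right s p)).mp h3'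
  have := Int.le_of_dvd one_pos h5
  omega

theorem Mpqrs_every_entry_wild (p q r s : ℤ) (hp : 1 < p) (hq : 1 < q) (hr : 1 < r)
    (hs : 1 < s) (hdet : p * s - q * r = 1) (N : ℕ) (hN : (N : ℤ) = p * q * r * s)
    (i j : ℤ) : IsWild (Mpqrs p q r s N) i j := by
  unfold IsWild
  rw [cast_nbhd, Ne, ZMod.intCast_zmod_eq_zero_iff_dvd, hN, nbhd_period]
  have hi4 : i % 4 = 0 ∨ i % 4 = 1 ∨ i % 4 = 2 ∨ i % 4 = 3 := by omega
  have hj4 : j % 4 = 0 ∨ j % 4 = 1 ∨ j % 4 = 2 ∨ j % 4 = 3 := by omega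
  rcases hi4 with hi | hi | hi | hi <;> rcases hj4 with hj | hj | hj | hj
  · rw [hi, hj]
    have hval : nbhdDet (intM p q r s) 0 0 = q*r*s := by
      simp [nbhdDet, intM, blockM, Matrix.det_fin_three, ← Fin.ofNat_eq_cast]
      linear_combination (q*r*s) * hdet
    rw [hval]
    exact notA p q r s hp hq hr hs hdet
  · rw [hi, hj]
    have hval : nbhdDet (intM p q r s) 0 1 = p*r*s := by
      simp [nbhdDet, intM, blockM, Matrix.det_fin_three, ← Fin.ofNat_eq_cast]
      linear_combination (p*r*s) * hdet
    rw [hval]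
    exact notB p q r s hp hq hr hs hdet
  · rw [hi, hj]
    have hval : nbhdDet (intM p q r s) 0 2 = q*r*s := by
      simp [nbhdDet, intM, blockM, Matrix.det_fin_three, ← Fin.ofNat_eq_cast]
      linear_combination (q*r*s) * hdet
    rw [hval]
    exact notA p q r s hp hq hr hs hdet
  · rw [hi, hj]
    have hval : nbhdDet (intM p q r s) 0 3 = p*r*s := by
      simp [nbhdDet, intM, blockM, Matrix.det_fin_three, ← Fin.ofNat_eq_cast]
      linear_combination (p*r*s) * hdet
    rw [hval]
    exact notB p q r s hp hq hr hs hdet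
  · rw [hi, hj]
    have hval : nbhdDet (intM p q r s) 1 0 = p*q*s := by
      simp [nbhdDet, intM, blockM, Matrix.det_fin_three, ← Fin.ofNat_eq_cast]
      linear_combination (p*q*s) * hdet
    rw [hval]
    exact notC p q r s hp hq hr hs hdet
  · rw [hi, hj]
    have hval : nbhdDet (intM p q r s) 1 1 = p*q*r := by
      simp [nbhdDet, intM, blockM, Matrix.det_fin_three, ← Fin.ofNat_eq_cast]
      linear_combination (p*q*r) * hdet
    rw [hval]
    exact notD p q r s hp hq hr hs hdet
  · rw [hi, hj]
    have hval : nbhdDet (intM p q r s) 1 2 = p*q*s := by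
      simp [nbhdDet, intM, blockM, Matrix.det_fin_three, ← Fin.ofNat_eq_cast]
      linear_combination (p*q*s) * hdet
    rw [hval]
    exact notC p q r s hp hq hr hs hdet
  · rw [hi, hj]
    have hval : nbhdDet (intM p q r s) 1 3 = p*q*r := by
      simp [nbhdDet, intM, blockM, Matrix.det_fin_three, ← Fin.ofNat_eq_cast]
      linear_combination (p*q*r) * hdet
    rw [hval]
    exact notD p q r s hp hq hr hs hdet
  · rw [hi, hj]
    have hval : nbhdDet (intM p q r s) 2 0 = q*r*s + p*q*r*s*s := by
      simp [nbhdDet, intM, blockM, Matrix.det_fin_three, ← Fin.ofNat_eq_cast]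
      linear_combination (q*r*s + p*q*r*s*s) * hdet
    rw [hval]
    exact notE p q r s hp hq hr hs hdet
  · rw [hi, hj]
    have hval : nbhdDet (intM p q r s) 2 1 = p*p*r*s*s := by
      simp [nbhdDet, intM, blockM, Matrix.det_fin_three, ← Fin.ofNat_eq_cast]
      linear_combination (p*q*r*r*s) * hdet
    rw [hval]
    exact notF p q r s hp hq hr hs hdet
  · rw [hi, hj]
    have hval : nbhdDet (intM p q r s) 2 2 = q*r*s := by
      simp [nbhdDet, intM, blockM, Matrix.det_fin_three, ← Fin.ofNat_eq_cast]
      linear_combination (q*r*s) * hdet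
    rw [hval]
    exact notA p q r s hp hq hr hs hdet
  · rw [hi, hj]
    have hval : nbhdDet (intM p q r s) 2 3 = p*r*s := by
      simp [nbhdDet, intM, blockM, Matrix.det_fin_three, ← Fin.ofNat_eq_cast]
      linear_combination (p*r*s) * hdet
    rw [hval]
    exact notB p q r s hp hq hr hs hdet
  · rw [hi, hj]
    have hval : nbhdDet (intM p q r s) 3 0 = p*p*q*s*s := by
      simp [nbhdDet, intM, blockM, Matrix.det_fin_three, ← Fin.ofNat_eq_cast]
      linear_combination (p*q*q*r*s) * hdet
    rw [hval]
    exact notG p q r s hp hq hr hs hdet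
  · rw [hi, hj]
    have hval : nbhdDet (intM p q r s) 3 1 = p*q*r + p*p*q*r*s := by
      simp [nbhdDet, intM, blockM, Matrix.det_fin_three, ← Fin.ofNat_eq_cast]
      linear_combination (p*q*r + p*p*q*r*s) * hdet
    rw [hval]
    exact notH p q r s hp hq hr hs hdet
  · rw [hi, hj]
    have hval : nbhdDet (intM p q r s) 3 2 = p*q*s := by
      simp [nbhdDet, intM, blockM, Matrix.det_fin_three, ← Fin.ofNat_eq_cast]
      linear_combination (p*q*s) * hdet
    rw [hval]
    exact notC p q r s hp hq hr hs hdet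
  · rw [hi, hj]
    have hval : nbhdDet (intM p q r s) 3 3 = p*q*r := by
      simp [nbhdDet, intM, blockM, Matrix.det_fin_three, ← Fin.ofNat_eq_cast]
      linear_combination (p*q*r) * hdet
    rw [hval]
    exact notD p q r s hp hq hr hs hdet
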